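/- Let E be a finite-dimensional real inner product space with 2 ≤ dim E, let u ∈ E with t := ⟪u,u⟫ > 0, and let a₁,a₂,a₃,b₁,b₂,b₃ ∈ ℝ. Then the F-natural bilinear form G on E × E is nondegenerate if and only if α ≠ 0 and φ ≠ 0. -/

import Mathlib

/-- The pointwise F-natural bilinear form on `E × E` determined by the six constants
`a₁, a₂, a₃, b₁, b₂, b₃` and the base vector `u`. -/
noncomputable def FNatForm {E : Type*} [NormedAddCommGroup E] [InnerProductSpace ℝ E]
    (u : E) (a₁ a₂ a₃ b₁ b₂ b₃ : ℝ) (X Y : E × E) : ℝ :=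
  (a₁ + a₃) * (inner ℝ X.1 Y.1 : ℝ) + (b₁ + b₃) * (inner ℝ X.1 u : ℝ) * (inner ℝ Y.1 u : ℝ)
    + a₂ * ((inner ℝ X.1 Y.2 : ℝ) + (inner ℝ X.2 Y.1 : ℝ))
    + b₂ * ((inner ℝ X.1 u : ℝ) * (inner ℝ Y.2 u : ℝ) + (inner ℝ X.2 u : ℝ) * (inner ℝ Y.1 u : ℝ))
    + a₁ * (inner ℝ X.2 Y.2 : ℝ) + b₁ * (inner ℝ X.2 u : ℝ) * (inner ℝ Y.2 u : ℝ)

/-- A singular symmetric 2×2 matrix has a nonzero kernel vector. -/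
lemma fnat_aux_ker (p q r : ℝ) (h : p * r - q ^ 2 = 0) :
    ∃ c d : ℝ, (c ≠ 0 ∨ d ≠ 0) ∧ p * c + q * d = 0 ∧ q * c + r * d = 0 := by
  by_cases hq : q = 0
  · by_cases hp : p = 0
    · exact ⟨1, 0, Or.inl one_ne_zero, by simp [hp, hq], by simp [hq]⟩
    · refine ⟨0, 1, Or.inr one_ne_zero, by simp [hq], ?_⟩
      have hpr : p * r = 0 := by nlinarith
      have hr : r = 0 := (mul_eq_zero.mp hpr).resolve_left hp
      simp [hq, hr]
  · exact ⟨q, -p, Or.inl hq, by ring, by nlinarith⟩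

/-- Pointwise version of Proposition 1 (1): the F-natural form is nondegenerate iff
`α ≠ 0` and `φ ≠ 0`, where `t = ⟪u,u⟫`, `α = a₁(a₁+a₃) − a₂²` and
`φ = (a₁ + t b₁)((a₁+a₃) + t(b₁+b₃)) − (a₂ + t b₂)²`. -/
theorem FNatForm_nondegenerate_iff {E : Type*} [NormedAddCommGroup E] [InnerProductSpace ℝ E]
    [FiniteDimensional ℝ E] (hdim : 2 ≤ Module.finrank ℝ E)
    (u : E) (ht : 0 < (inner ℝ u u : ℝ)) (a₁ a₂ a₃ b₁ b₂ b₃ : ℝ) :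
    (∀ X : E × E, (∀ Y : E × E, FNatForm u a₁ a₂ a₃ b₁ b₂ b₃ X Y = 0) → X = 0) ↔
      (a₁ * (a₁ + a₃) - a₂ ^ 2 ≠ 0 ∧
        (a₁ + (inner ℝ u u : ℝ) * b₁) * ((a₁ + a₃) + (inner ℝ u u : ℝ) * (b₁ + b₃))
            - (a₂ + (inner ℝ u u : ℝ) * b₂) ^ 2 ≠ 0) := by
  have hu0 : u ≠ 0 := by
    intro h; rw [h, inner_zero_left] at ht; exact lt_irrefl _ ht
  set t : ℝ := (inner ℝ u u : ℝ) with ht_def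
  constructor
  · intro hnd
    constructor
    · -- α ≠ 0
      intro hα
      -- get a nonzero vector orthogonal to u
      obtain ⟨w, hwmem, hw0⟩ : ∃ w : E, w ∈ (ℝ ∙ u)ᗮ ∧ w ≠ 0 := by
        apply Submodule.exists_mem_ne_zero_of_ne_bot
        intro hbot
        have h1 : Module.finrank ℝ (ℝ ∙ u : Submodule ℝ E) = 1 :=
          finrank_span_singleton hu0
        have h2 := Submodule.finrank_add_finrank_orthogonal (K := (ℝ ∙ u : Submodule ℝ E))
        rw [hbot, h1] at h2
        simp at h2
        omega
      have hwu : (inner ℝ w u : ℝ) = 0 :=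
        Submodule.mem_orthogonal_singleton_iff_inner_left.mp hwmem
      have huw : (inner ℝ u w : ℝ) = 0 := by rwa [real_inner_comm]
      obtain ⟨c, d, hcd, h1, h2⟩ := fnat_aux_ker (a₁ + a₃) a₂ a₁ (by nlinarith)
      have hker : ∀ Y : E × E, FNatForm u a₁ a₂ a₃ b₁ b₂ b₃ (c • w, d • w) Y = 0 := by
        intro Y
        simp only [FNatForm, real_inner_smul_left, hwu]
        linear_combination (inner ℝ w Y.1 : ℝ) * h1 + (inner ℝ w Y.2 : ℝ) * h2
      have := hnd _ hker
      rw [Prod.ext_iff] at this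
      rcases hcd with hc | hd
      · exact hw0 (by
          have := this.1
          simpa [smul_eq_zero, hc] using this)
      · exact hw0 (by
          have := this.2
          simpa [smul_eq_zero, hd] using this)
    · -- φ ≠ 0
      intro hφ
      obtain ⟨c, d, hcd, h1, h2⟩ :=
        fnat_aux_ker ((a₁ + a₃) + t * (b₁ + b₃)) (a₂ + t * b₂) (a₁ + t * b₁) (by nlinarith)
      have hker : ∀ Y : E × E, FNatForm u a₁ a₂ a₃ b₁ b₂ b₃ (c • u, d • u) Y = 0 := by
        intro Y
        have hsym1 : (inner ℝ u Y.1 : ℝ) = (inner ℝ Y.1 u : ℝ) := real_inner_comm _ _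
        have hsym2 : (inner ℝ u Y.2 : ℝ) = (inner ℝ Y.2 u : ℝ) := real_inner_comm _ _
        simp only [FNatForm, real_inner_smul_left, ← ht_def, hsym1, hsym2]
        linear_combination (inner ℝ Y.1 u : ℝ) * h1 + (inner ℝ Y.2 u : ℝ) * h2
      have := hnd _ hker
      rw [Prod.ext_iff] at this
      rcases hcd with hc | hd
      · exact hu0 (by have := this.1; simpa [smul_eq_zero, hc] using this)
      · exact hu0 (by have := this.2; simpa [smul_eq_zero, hd] using this)
  · rintro ⟨hα, hφ⟩ X hX
    set p : ℝ := (inner ℝ X.1 u : ℝ) with hp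
    set q : ℝ := (inner ℝ X.2 u : ℝ) with hq
    have e1 := hX (u, 0)
    have e2 := hX ((0 : E), u)
    simp only [FNatForm, inner_zero_right, inner_zero_left, ← ht_def, ← hp, ← hq] at e1 e2
    have hφp : ((a₁ + t * b₁) * ((a₁ + a₃) + t * (b₁ + b₃)) - (a₂ + t * b₂) ^ 2) * p = 0 := by
      linear_combination (a₁ + t * b₁) * e1 - (a₂ + t * b₂) * e2
    have hφq : ((a₁ + t * b₁) * ((a₁ + a₃) + t * (b₁ + b₃)) - (a₂ + t * b₂) ^ 2) * q = 0 := by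
      linear_combination ((a₁ + a₃) + t * (b₁ + b₃)) * e2 - (a₂ + t * b₂) * e1
    have hp0 : p = 0 := (mul_eq_zero.mp hφp).resolve_left hφ
    have hq0 : q = 0 := (mul_eq_zero.mp hφq).resolve_left hφ
    -- now get linear relations
    have key : ∀ Z : E, (a₁ + a₃) * (inner ℝ X.1 Z : ℝ) + a₂ * (inner ℝ X.2 Z : ℝ) = 0 ∧
        a₂ * (inner ℝ X.1 Z : ℝ) + a₁ * (inner ℝ X.2 Z : ℝ) = 0 := by
      intro Z
      have f1 := hX (Z, 0)
      have f2 := hX ((0 : E), Z)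
      simp only [FNatForm, inner_zero_right, inner_zero_left, ← hp, ← hq, hp0, hq0] at f1 f2
      constructor
      · linear_combination f1
      · linear_combination f2
    have hX1 : X.1 = 0 := by
      rw [← inner_self_eq_zero (𝕜 := ℝ)]
      have k1 := (key X.1).1
      have k2 := (key X.1).2
      have h3 : (a₁ * (a₁ + a₃) - a₂ ^ 2) * (inner ℝ X.1 X.1 : ℝ) = 0 := by
        linear_combination a₁ * k1 - a₂ * k2
      exact (mul_eq_zero.mp h3).resolve_left hα
    have hX2 : X.2 = 0 := by
      rw [← inner_self_eq_zero (𝕜 := ℝ)]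
      have k1 := (key X.2).1
      have k2 := (key X.2).2
      have h3 : (a₁ * (a₁ + a₃) - a₂ ^ 2) * (inner ℝ X.2 X.2 : ℝ) = 0 := by
        linear_combination (a₁ + a₃) * k2 - a₂ * k1
      exact (mul_eq_zero.mp h3).resolve_left hα
    exact Prod.ext hX1 hX2
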